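/- Fix d ≥ 1 and μ, ν ∈ P₁(ℝ^d). Then W₁^{(σ)}(μ, ν) → W₁(μ, ν) as σ → 0⁺. -/

import Mathlib

open MeasureTheory ProbabilityTheory ENNReal Filter Topology BoundedContinuousFunction
open scoped RealInnerProductSpace

noncomputable section

/-- A coupling of `μ` and `ν`: a probability measure on the product space whose
marginals are `μ` and `ν`. -/
def IsCoupling {d : ℕ} (π : Measure (EuclideanSpace ℝ (Fin d) × EuclideanSpace ℝ (Fin d)))
    (μ ν : Measure (EuclideanSpace ℝ (Fin d))) : Prop :=
  π.map Prod.fst = μ ∧ π.map Prod.snd = ν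

/-- The 1-Wasserstein distance `W₁(μ,ν) = inf_{π ∈ Π(μ,ν)} ∫ ‖x - y‖ dπ(x,y)`
(with values in `ℝ≥0∞`). -/
noncomputable def W1 {d : ℕ} (μ ν : Measure (EuclideanSpace ℝ (Fin d))) : ℝ≥0∞ :=
  ⨅ (π : Measure (EuclideanSpace ℝ (Fin d) × EuclideanSpace ℝ (Fin d))) (_ : IsCoupling π μ ν),
    ∫⁻ p, ‖p.1 - p.2‖₊ ∂π

/-- The centered isotropic Gaussian measure `N_σ = N(0, σ² I_d)` on `ℝ^d`
(for `σ = 0` this is the Dirac measure at the origin). -/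
noncomputable def gaussianEuc (d : ℕ) (σ : ℝ) : Measure (EuclideanSpace ℝ (Fin d)) :=
  (Measure.pi fun _ : Fin d => gaussianReal 0 ⟨σ ^ 2, sq_nonneg σ⟩).map
    (MeasurableEquiv.toLp 2 (Fin d → ℝ))

/-- The Gaussian-smoothed 1-Wasserstein distance
`W₁^{(σ)}(μ,ν) = W₁(μ ∗ N_σ, ν ∗ N_σ)`. -/
noncomputable def W1s {d : ℕ} (σ : ℝ) (μ ν : Measure (EuclideanSpace ℝ (Fin d))) : ℝ≥0∞ :=
  W1 (μ.conv (gaussianEuc d σ)) (ν.conv (gaussianEuc d σ))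

/-- `μ` has a finite first moment, i.e. `μ ∈ P₁(ℝ^d)`. -/
def FiniteFirstMoment {d : ℕ} (μ : Measure (EuclideanSpace ℝ (Fin d))) : Prop :=
  ∫⁻ x, ‖x‖₊ ∂μ ≠ ⊤

namespace WassersteinAux

open scoped NNReal

variable {d : ℕ}

local notation "E" => EuclideanSpace ℝ (Fin d)

lemma cost_meas : Measurable fun p : E × E => (‖p.1 - p.2‖₊ : ℝ≥0∞) :=
  ((continuous_fst.sub continuous_snd).nnnorm.measurable).coe_nnreal_ennreal

lemma W1_le {π : Measure (E × E)} {μ ν : Measure E} (h : IsCoupling π μ ν) :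
    W1 μ ν ≤ ∫⁻ p, ‖p.1 - p.2‖₊ ∂π := iInf₂_le π h

lemma isProb_of_coupling {π : Measure (E × E)} {μ ν : Measure E}
    [IsProbabilityMeasure μ] (h : IsCoupling π μ ν) : IsProbabilityMeasure π := by
  constructor
  have : π Set.univ = μ Set.univ := by
    rw [← h.1, Measure.map_apply measurable_fst MeasurableSet.univ]; rfl
  simp [this]

lemma glue {μ ρ ν : Measure E} [IsProbabilityMeasure μ] [IsProbabilityMeasure ρ]
    [IsProbabilityMeasure ν] {π₁ π₂ : Measure (E × E)}
    (h₁ : IsCoupling π₁ μ ρ) (h₂ : IsCoupling π₂ ρ ν) :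
    ∃ π : Measure (E × E), IsCoupling π μ ν ∧
      ∫⁻ p, ‖p.1 - p.2‖₊ ∂π ≤ ∫⁻ p, ‖p.1 - p.2‖₊ ∂π₁ + ∫⁻ p, ‖p.1 - p.2‖₊ ∂π₂ := by
  haveI := isProb_of_coupling h₁
  haveI := isProb_of_coupling h₂
  set π₁' : Measure (E × E) := π₁.map Prod.swap with hπ₁'
  haveI : IsProbabilityMeasure π₁' := Measure.isProbabilityMeasure_map measurable_swap.aemeasurable
  have hfst1 : π₁'.fst = ρ := by rw [hπ₁', Measure.fst_map_swap]; exact h₁.2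
  have hfst2 : π₂.fst = ρ := h₂.1
  set κ₁ : Kernel E E := π₁'.condKernel with hκ₁
  set κ₂ : Kernel E E := π₂.condKernel with hκ₂
  have hd₁ : ρ ⊗ₘ κ₁ = π₁' := by rw [← hfst1]; exact π₁'.disintegrate κ₁
  have hd₂ : ρ ⊗ₘ κ₂ = π₂ := by rw [← hfst2]; exact π₂.disintegrate κ₂
  set τ : Measure (E × E × E) := ρ ⊗ₘ (κ₁ ×ₖ κ₂) with hτ
  have hf₁ : Measurable fun p : E × E × E => (p.1, p.2.1) :=
    measurable_fst.prodMk measurable_snd.fst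
  have hf₂ : Measurable fun p : E × E × E => (p.1, p.2.2) :=
    measurable_fst.prodMk measurable_snd.snd
  have hmap₁ : τ.map (fun p => (p.1, p.2.1)) = ρ ⊗ₘ κ₁ := by
    ext s hs
    rw [Measure.map_apply hf₁ hs, Measure.compProd_apply (hf₁ hs), Measure.compProd_apply hs]
    refine lintegral_congr fun b => ?_
    have heq : (Prod.mk b ⁻¹' ((fun p : E × E × E => (p.1, p.2.1)) ⁻¹' s))
        = {p : E × E | p.1 ∈ Prod.mk b ⁻¹' s} := rfl
    rw [heq, ← Kernel.fst_apply' _ _ (measurable_prodMk_left hs), Kernel.fst_prod]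
  have hmap₂ : τ.map (fun p => (p.1, p.2.2)) = ρ ⊗ₘ κ₂ := by
    ext s hs
    rw [Measure.map_apply hf₂ hs, Measure.compProd_apply (hf₂ hs), Measure.compProd_apply hs]
    refine lintegral_congr fun b => ?_
    have heq : (Prod.mk b ⁻¹' ((fun p : E × E × E => (p.1, p.2.2)) ⁻¹' s))
        = (Prod.snd ⁻¹' (Prod.mk b ⁻¹' s) : Set (E × E)) := rfl
    rw [heq, ← Kernel.snd_apply' _ _ (measurable_prodMk_left hs), Kernel.snd_prod]
  refine ⟨τ.map Prod.snd, ⟨?_, ?_⟩, ?_⟩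
  · rw [Measure.map_map measurable_fst measurable_snd]
    have : (Prod.fst ∘ Prod.snd : E × E × E → E) = Prod.snd ∘ (fun p => (p.1, p.2.1)) := rfl
    rw [this, ← Measure.map_map measurable_snd hf₁, hmap₁, hd₁]
    rw [show (π₁'.map Prod.snd) = π₁'.snd from rfl, hπ₁', Measure.snd_map_swap]
    exact h₁.1
  · rw [Measure.map_map measurable_snd measurable_snd]
    have : (Prod.snd ∘ Prod.snd : E × E × E → E) = Prod.snd ∘ (fun p => (p.1, p.2.2)) := rfl
    rw [this, ← Measure.map_map measurable_snd hf₂, hmap₂, hd₂]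
    exact h₂.2
  · rw [lintegral_map cost_meas measurable_snd]
    have hmono : ∫⁻ p : E × E × E, (‖p.2.1 - p.2.2‖₊ : ℝ≥0∞) ∂τ
        ≤ ∫⁻ p : E × E × E, ((‖p.2.1 - p.1‖₊ : ℝ≥0∞) + ‖p.1 - p.2.2‖₊) ∂τ := by
      refine lintegral_mono fun p => ?_
      have := edist_triangle p.2.1 p.1 p.2.2
      simp only [edist_eq_enorm_sub] at this
      exact this
    refine hmono.trans ?_
    rw [lintegral_add_left (f := fun p : E × E × E => (‖p.2.1 - p.1‖₊ : ℝ≥0∞))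
      (((continuous_snd.fst.sub continuous_fst).nnnorm.measurable).coe_nnreal_ennreal)]
    gcongr
    · have : ∫⁻ p : E × E × E, (‖p.2.1 - p.1‖₊ : ℝ≥0∞) ∂τ
          = ∫⁻ q : E × E, (‖q.2 - q.1‖₊ : ℝ≥0∞) ∂(τ.map (fun p => (p.1, p.2.1))) := by
        rw [lintegral_map (f := fun q : E × E => (‖q.2 - q.1‖₊ : ℝ≥0∞))
          (((continuous_snd.sub continuous_fst).nnnorm.measurable).coe_nnreal_ennreal) hf₁]
      rw [this, hmap₁, hd₁, hπ₁',
        lintegral_map (f := fun q : E × E => (‖q.2 - q.1‖₊ : ℝ≥0∞))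
          (((continuous_snd.sub continuous_fst).nnnorm.measurable).coe_nnreal_ennreal)
          measurable_swap]
      exact le_of_eq rfl
    · have : ∫⁻ p : E × E × E, (‖p.1 - p.2.2‖₊ : ℝ≥0∞) ∂τ
          = ∫⁻ q : E × E, (‖q.1 - q.2‖₊ : ℝ≥0∞) ∂(τ.map (fun p => (p.1, p.2.2))) := by
        rw [lintegral_map cost_meas hf₂]
      rw [this, hmap₂, hd₂]

lemma W1_triangle (μ ρ ν : Measure E) [IsProbabilityMeasure μ] [IsProbabilityMeasure ρ]
    [IsProbabilityMeasure ν] : W1 μ ν ≤ W1 μ ρ + W1 ρ ν := by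
  have key : ∀ π₁, IsCoupling π₁ μ ρ →
      W1 μ ν ≤ (∫⁻ p, ‖p.1 - p.2‖₊ ∂π₁) + W1 ρ ν := by
    intro π₁ h₁
    rw [← tsub_le_iff_left]
    refine le_iInf₂ fun π₂ h₂ => ?_
    rw [tsub_le_iff_left]
    obtain ⟨π, hπ, hc⟩ := glue h₁ h₂
    exact (W1_le hπ).trans hc
  have h2 : W1 μ ν - W1 ρ ν ≤ W1 μ ρ :=
    le_iInf₂ fun π₁ h₁ => tsub_le_iff_left.2 (((key π₁ h₁)).trans_eq (add_comm _ _))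
  exact tsub_le_iff_right.1 h2

lemma W1_le_symm {μ ν : Measure E} : W1 μ ν ≤ W1 ν μ :=
  le_iInf₂ fun π hπ => by
    have h' : IsCoupling (π.map Prod.swap) μ ν := by
      constructor
      · rw [Measure.map_map measurable_fst measurable_swap]; exact hπ.2
      · rw [Measure.map_map measurable_snd measurable_swap]; exact hπ.1
    refine (W1_le h').trans_eq ?_
    rw [lintegral_map cost_meas measurable_swap]
    exact lintegral_congr fun p => by
      have h : p.2 - p.1 = -(p.1 - p.2) := by abel
      rw [Prod.snd_swap, Prod.fst_swap, h, nnnorm_neg]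

lemma W1_symm (μ ν : Measure E) : W1 μ ν = W1 ν μ :=
  le_antisymm W1_le_symm W1_le_symm

lemma conv_prob (μ G : Measure E) [IsProbabilityMeasure μ] [IsProbabilityMeasure G] :
    IsProbabilityMeasure (μ.conv G) := by
  have : μ.conv G = (μ.prod G).map (fun p : E × E => p.1 + p.2) := rfl
  rw [this]
  exact Measure.isProbabilityMeasure_map ((continuous_fst.add continuous_snd).measurable).aemeasurable

lemma W1_conv_le (μ G : Measure E) [IsProbabilityMeasure μ] [IsProbabilityMeasure G] :
    W1 μ (μ.conv G) ≤ ∫⁻ z, ‖z‖₊ ∂G := by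
  have hadd : Measurable fun p : E × E => p.1 + p.2 :=
    (continuous_fst.add continuous_snd).measurable
  have hh : Measurable fun p : E × E => (p.1, p.1 + p.2) := measurable_fst.prodMk hadd
  have hcpl : IsCoupling ((μ.prod G).map fun p => (p.1, p.1 + p.2)) μ (μ.conv G) := by
    constructor
    · rw [Measure.map_map measurable_fst hh]
      have : (Prod.fst ∘ fun p : E × E => (p.1, p.1 + p.2)) = Prod.fst := rfl
      rw [this, Measure.map_fst_prod]; simp
    · rw [Measure.map_map measurable_snd hh]
      rfl
  refine (W1_le hcpl).trans ?_
  rw [lintegral_map cost_meas hh]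
  have : ∀ p : E × E, (‖p.1 - (p.1 + p.2)‖₊ : ℝ≥0∞) = (‖p.2‖₊ : ℝ≥0∞) := by
    intro p
    have : p.1 - (p.1 + p.2) = -p.2 := by abel
    rw [this, nnnorm_neg]
  rw [lintegral_congr this]
  have hsnd : ∫⁻ z, (‖z‖₊ : ℝ≥0∞) ∂((μ.prod G).map Prod.snd)
      = ∫⁻ p : E × E, (‖p.2‖₊ : ℝ≥0∞) ∂(μ.prod G) :=
    lintegral_map measurable_nnnorm.coe_nnreal_ennreal measurable_snd
  rw [← hsnd, Measure.map_snd_prod]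
  simp

lemma W1_lt_top (μ ν : Measure E) [IsProbabilityMeasure μ] [IsProbabilityMeasure ν]
    (hμ : ∫⁻ x, ‖x‖₊ ∂μ ≠ ⊤) (hν : ∫⁻ x, ‖x‖₊ ∂ν ≠ ⊤) : W1 μ ν ≠ ⊤ := by
  have hcpl : IsCoupling (μ.prod ν) μ ν := by
    constructor
    · rw [Measure.map_fst_prod]; simp
    · rw [Measure.map_snd_prod]; simp
  have hb : W1 μ ν ≤ (∫⁻ x, ‖x‖₊ ∂μ) + ∫⁻ x, ‖x‖₊ ∂ν := by
    refine (W1_le hcpl).trans ?_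
    have hmono : ∫⁻ p : E × E, (‖p.1 - p.2‖₊ : ℝ≥0∞) ∂(μ.prod ν)
        ≤ ∫⁻ p : E × E, ((‖p.1‖₊ : ℝ≥0∞) + ‖p.2‖₊) ∂(μ.prod ν) := by
      refine lintegral_mono fun p => ?_
      calc (‖p.1 - p.2‖₊ : ℝ≥0∞) ≤ ((‖p.1‖₊ + ‖p.2‖₊ : ℝ≥0) : ℝ≥0∞) :=
            ENNReal.coe_le_coe.2 (nnnorm_sub_le p.1 p.2)
        _ = (‖p.1‖₊ : ℝ≥0∞) + ‖p.2‖₊ := by norm_cast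
    refine hmono.trans ?_
    rw [lintegral_add_left (continuous_fst.nnnorm.measurable.coe_nnreal_ennreal)]
    gcongr
    · have hfst : ∫⁻ z, (‖z‖₊ : ℝ≥0∞) ∂((μ.prod ν).map Prod.fst)
          = ∫⁻ p : E × E, (‖p.1‖₊ : ℝ≥0∞) ∂(μ.prod ν) :=
        lintegral_map measurable_nnnorm.coe_nnreal_ennreal measurable_fst
      rw [← hfst, Measure.map_fst_prod]
      simp
    · have hsnd : ∫⁻ z, (‖z‖₊ : ℝ≥0∞) ∂((μ.prod ν).map Prod.snd)
          = ∫⁻ p : E × E, (‖p.2‖₊ : ℝ≥0∞) ∂(μ.prod ν) :=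
        lintegral_map measurable_nnnorm.coe_nnreal_ennreal measurable_snd
      rw [← hsnd, Measure.map_snd_prod]
      simp
  exact ne_top_of_le_ne_top (ENNReal.add_ne_top.2 ⟨hμ, hν⟩) hb

lemma gauss1_moment_ne_top : ∫⁻ x, ‖x‖₊ ∂(gaussianReal 0 1) ≠ ⊤ := by
  rw [gaussianReal_of_var_ne_zero 0 one_ne_zero,
    lintegral_withDensity_eq_lintegral_mul _ (measurable_gaussianPDF 0 1)
      measurable_nnnorm.coe_nnreal_ennreal]
  have hint : Integrable fun x : ℝ => gaussianPDFReal 0 1 x * |x| := by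
    have h1 : Integrable fun x : ℝ => x * Real.exp (-(2⁻¹) * x ^ 2) := by
      have := integrable_rpow_mul_exp_neg_mul_sq (by norm_num : (0:ℝ) < 2⁻¹)
        (by norm_num : (-1:ℝ) < 1)
      simpa [Real.rpow_one] using this
    have h2 := h1.abs
    have heq : (fun x : ℝ => gaussianPDFReal 0 1 x * |x|)
        = fun x => (Real.sqrt (2 * Real.pi))⁻¹ * |x * Real.exp (-(2⁻¹) * x ^ 2)| := by
      funext x
      rw [gaussianPDFReal, abs_mul, Real.abs_exp]
      push_cast
      ring_nf
    rw [heq]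
    exact h2.const_mul _
  have hnn : ∀ x : ℝ, (0:ℝ) ≤ gaussianPDFReal 0 1 x * |x| :=
    fun x => mul_nonneg (gaussianPDFReal_nonneg 0 1 x) (abs_nonneg x)
  have hpt : ∀ x : ℝ, gaussianPDF 0 1 x * (‖x‖₊ : ℝ≥0∞)
      = ENNReal.ofReal (gaussianPDFReal 0 1 x * |x|) := by
    intro x
    rw [gaussianPDF, ENNReal.ofReal_mul (gaussianPDFReal_nonneg 0 1 x)]
    congr 1
    exact Real.enorm_eq_ofReal_abs x
  simp only [Pi.mul_apply]
  rw [lintegral_congr hpt]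
  exact ((hasFiniteIntegral_iff_ofReal (Filter.Eventually.of_forall hnn)).1
    hint.hasFiniteIntegral).ne

lemma gauss_sigma_moment (σ : ℝ) :
    ∫⁻ x, ‖x‖₊ ∂(gaussianReal 0 ⟨σ ^ 2, sq_nonneg σ⟩)
      = (‖σ‖₊ : ℝ≥0∞) * ∫⁻ x, ‖x‖₊ ∂(gaussianReal 0 1) := by
  have hmap : (gaussianReal 0 1).map (σ * ·) = gaussianReal 0 ⟨σ ^ 2, sq_nonneg σ⟩ := by
    rw [gaussianReal_map_const_mul]
    norm_num
    rfl
  rw [← hmap, lintegral_map measurable_nnnorm.coe_nnreal_ennreal (measurable_const_mul σ)]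
  have : ∀ x : ℝ, (‖σ * x‖₊ : ℝ≥0∞) = (‖σ‖₊ : ℝ≥0∞) * ‖x‖₊ := by
    intro x; rw [nnnorm_mul]; norm_cast
  rw [lintegral_congr this, lintegral_const_mul _ measurable_nnnorm.coe_nnreal_ennreal]

lemma pi_map_eval {ι : Type*} [Fintype ι] [DecidableEq ι] (μ : ι → Measure ℝ)
    [∀ i, IsProbabilityMeasure (μ i)] (i : ι) :
    (Measure.pi μ).map (fun x => x i) = μ i := by
  ext s hs
  rw [Measure.map_apply (measurable_pi_apply i) hs, Set.eval_preimage, Measure.pi_pi]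
  rw [Finset.prod_eq_single i (fun j _ hj => by rw [Function.update_of_ne hj]; simp)
    (fun h => absurd (Finset.mem_univ i) h)]
  rw [Function.update_self]

lemma norm_le_sum (d : ℕ) (x : Fin d → ℝ) :
    (‖(MeasurableEquiv.toLp 2 (Fin d → ℝ)) x‖₊ : ℝ≥0∞) ≤ ∑ i, (‖x i‖₊ : ℝ≥0∞) := by
  have hreal : ‖(MeasurableEquiv.toLp 2 (Fin d → ℝ)) x‖ ≤ ∑ i, ‖x i‖ := by
    rw [EuclideanSpace.norm_eq]
    have h1 : ∑ i, ‖((MeasurableEquiv.toLp 2 (Fin d → ℝ)) x) i‖ ^ 2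
        = ∑ i, ‖x i‖ ^ 2 := rfl
    have h2 : ∑ i, ‖x i‖ ^ 2 ≤ (∑ i, ‖x i‖) ^ 2 := by
      calc ∑ i, ‖x i‖ ^ 2 ≤ ∑ i, ‖x i‖ * ∑ j, ‖x j‖ :=
            Finset.sum_le_sum fun i _ => by
              rw [sq]
              exact mul_le_mul_of_nonneg_left
                (Finset.single_le_sum (fun j _ => norm_nonneg (x j)) (Finset.mem_univ i))
                (norm_nonneg _)
        _ = (∑ i, ‖x i‖) ^ 2 := by rw [← Finset.sum_mul, sq]
    calc Real.sqrt (∑ i, ‖((MeasurableEquiv.toLp 2 (Fin d → ℝ)) x) i‖ ^ 2)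
        ≤ Real.sqrt ((∑ i, ‖x i‖) ^ 2) := Real.sqrt_le_sqrt (by rw [h1]; exact h2)
      _ = ∑ i, ‖x i‖ := Real.sqrt_sq (Finset.sum_nonneg fun i _ => norm_nonneg _)
  calc (‖(MeasurableEquiv.toLp 2 (Fin d → ℝ)) x‖₊ : ℝ≥0∞)
      = ENNReal.ofReal ‖(MeasurableEquiv.toLp 2 (Fin d → ℝ)) x‖ :=
        (ofReal_norm _).symm
    _ ≤ ENNReal.ofReal (∑ i, ‖x i‖) := ENNReal.ofReal_le_ofReal hreal
    _ = ∑ i, (‖x i‖₊ : ℝ≥0∞) := by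
        rw [ENNReal.ofReal_sum_of_nonneg fun i _ => norm_nonneg _]
        exact Finset.sum_congr rfl fun i _ => ofReal_norm _

lemma gaussianEuc_moment_le (d : ℕ) (σ : ℝ) :
    ∫⁻ z, ‖z‖₊ ∂(gaussianEuc d σ)
      ≤ (d : ℝ≥0∞) * ((‖σ‖₊ : ℝ≥0∞) * ∫⁻ x, ‖x‖₊ ∂(gaussianReal 0 1)) := by
  rw [gaussianEuc, lintegral_map measurable_nnnorm.coe_nnreal_ennreal
    (MeasurableEquiv.toLp 2 (Fin d → ℝ)).measurable]
  calc ∫⁻ x : Fin d → ℝ, (‖(MeasurableEquiv.toLp 2 (Fin d → ℝ)) x‖₊ : ℝ≥0∞)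
        ∂(Measure.pi fun _ => gaussianReal 0 ⟨σ ^ 2, sq_nonneg σ⟩)
      ≤ ∫⁻ x : Fin d → ℝ, ∑ i, (‖x i‖₊ : ℝ≥0∞)
        ∂(Measure.pi fun _ => gaussianReal 0 ⟨σ ^ 2, sq_nonneg σ⟩) :=
        lintegral_mono fun x => norm_le_sum d x
    _ = ∑ i : Fin d, ∫⁻ x : Fin d → ℝ, (‖x i‖₊ : ℝ≥0∞)
        ∂(Measure.pi fun _ => gaussianReal 0 ⟨σ ^ 2, sq_nonneg σ⟩) :=
        lintegral_finset_sum _ fun i _ =>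
          ((measurable_pi_apply i).nnnorm.coe_nnreal_ennreal)
    _ = ∑ _i : Fin d, ∫⁻ t, (‖t‖₊ : ℝ≥0∞) ∂(gaussianReal 0 ⟨σ ^ 2, sq_nonneg σ⟩) := by
        refine Finset.sum_congr rfl fun i _ => ?_
        have h := lintegral_map
          (μ := Measure.pi fun _ : Fin d => gaussianReal 0 ⟨σ ^ 2, sq_nonneg σ⟩)
          measurable_nnnorm.coe_nnreal_ennreal (measurable_pi_apply i)
        haveI : ∀ _ : Fin d, IsProbabilityMeasure (gaussianReal 0 ⟨σ ^ 2, sq_nonneg σ⟩) :=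
          fun _ => instIsProbabilityMeasureGaussianReal _ _
        rw [@pi_map_eval _ _ _ (fun _ : Fin d => gaussianReal 0 ⟨σ ^ 2, sq_nonneg σ⟩) this i] at h
        exact h.symm
    _ = (d : ℝ≥0∞) * ((‖σ‖₊ : ℝ≥0∞) * ∫⁻ x, ‖x‖₊ ∂(gaussianReal 0 1)) := by
        rw [Finset.sum_const, Finset.card_univ, Fintype.card_fin, nsmul_eq_mul,
          gauss_sigma_moment]

lemma gaussianEuc_prob (d : ℕ) (σ : ℝ) : IsProbabilityMeasure (gaussianEuc d σ) := by
  rw [gaussianEuc]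
  haveI : ∀ _ : Fin d, IsProbabilityMeasure (gaussianReal 0 ⟨σ ^ 2, sq_nonneg σ⟩) :=
    fun _ => instIsProbabilityMeasureGaussianReal _ _
  exact Measure.isProbabilityMeasure_map (MeasurableEquiv.measurable _).aemeasurable

end WassersteinAux

open WassersteinAux in
/-- **Vanishing noise limit**: `W₁^{(σ)}(μ,ν) → W₁(μ,ν)` as `σ → 0⁺`. -/
theorem got_tendsto_wasserstein (d : ℕ) (hd : 1 ≤ d)
    (μ ν : Measure (EuclideanSpace ℝ (Fin d)))
    [IsProbabilityMeasure μ] [IsProbabilityMeasure ν]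
    (hμ : FiniteFirstMoment μ) (hν : FiniteFirstMoment ν) :
    Tendsto (fun σ : ℝ => W1s σ μ ν) (𝓝[>] (0 : ℝ)) (𝓝 (W1 μ ν)) := by
  classical
  set C := ∫⁻ x, ‖x‖₊ ∂(gaussianReal 0 1) with hC
  have hCtop : C ≠ ⊤ := gauss1_moment_ne_top
  set L := W1 μ ν with hLdef
  have hLtop : L ≠ ⊤ := W1_lt_top μ ν hμ hν
  set ε : ℝ → ℝ≥0∞ := fun σ => ∫⁻ z, ‖z‖₊ ∂(gaussianEuc d σ) with hεdef
  have hub : ∀ σ : ℝ, W1s σ μ ν ≤ L + (ε σ + ε σ) := by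
    intro σ
    haveI := gaussianEuc_prob d σ
    haveI := conv_prob μ (gaussianEuc d σ)
    haveI := conv_prob ν (gaussianEuc d σ)
    have h1 : W1s σ μ ν ≤ W1 (μ.conv (gaussianEuc d σ)) μ + W1 μ (ν.conv (gaussianEuc d σ)) :=
      W1_triangle _ _ _
    have h2 : W1 μ (ν.conv (gaussianEuc d σ)) ≤ W1 μ ν + W1 ν (ν.conv (gaussianEuc d σ)) :=
      W1_triangle _ _ _
    have h3 : W1 (μ.conv (gaussianEuc d σ)) μ ≤ ε σ := by
      rw [← W1_symm]; exact W1_conv_le μ (gaussianEuc d σ)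
    have h4 : W1 ν (ν.conv (gaussianEuc d σ)) ≤ ε σ := W1_conv_le ν (gaussianEuc d σ)
    calc W1s σ μ ν ≤ ε σ + (L + ε σ) := h1.trans (add_le_add h3 (h2.trans (add_le_add_right h4 _)))
      _ = L + (ε σ + ε σ) := by ring
  have hlb : ∀ σ : ℝ, L ≤ W1s σ μ ν + (ε σ + ε σ) := by
    intro σ
    haveI := gaussianEuc_prob d σ
    haveI := conv_prob μ (gaussianEuc d σ)
    haveI := conv_prob ν (gaussianEuc d σ)
    have h1 : L ≤ W1 μ (μ.conv (gaussianEuc d σ)) + W1 (μ.conv (gaussianEuc d σ)) ν :=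
      W1_triangle _ _ _
    have h2 : W1 (μ.conv (gaussianEuc d σ)) ν
        ≤ W1 (μ.conv (gaussianEuc d σ)) (ν.conv (gaussianEuc d σ))
          + W1 (ν.conv (gaussianEuc d σ)) ν := W1_triangle _ _ _
    have h3 : W1 μ (μ.conv (gaussianEuc d σ)) ≤ ε σ := W1_conv_le μ (gaussianEuc d σ)
    have h4 : W1 (ν.conv (gaussianEuc d σ)) ν ≤ ε σ := by
      rw [← W1_symm]; exact W1_conv_le ν (gaussianEuc d σ)
    calc L ≤ ε σ + (W1s σ μ ν + ε σ) :=
          h1.trans (add_le_add h3 (h2.trans (add_le_add_right h4 _)))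
      _ = W1s σ μ ν + (ε σ + ε σ) := by ring
  have hεt : Tendsto ε (𝓝[>] (0:ℝ)) (𝓝 0) := by
    have hcont : Tendsto (fun σ : ℝ => (‖σ‖₊ : ℝ≥0∞)) (𝓝[>] (0:ℝ)) (𝓝 0) := by
      have hc : Continuous fun σ : ℝ => (‖σ‖₊ : ℝ≥0∞) :=
        ENNReal.continuous_coe.comp continuous_nnnorm
      have := hc.tendsto (0:ℝ)
      simp only [nnnorm_zero, ENNReal.coe_zero] at this
      exact this.mono_left nhdsWithin_le_nhds
    have hmul : Tendsto (fun σ : ℝ => (d : ℝ≥0∞) * ((‖σ‖₊ : ℝ≥0∞) * C)) (𝓝[>] (0:ℝ)) (𝓝 0) := by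
      have h2 : Tendsto (fun σ : ℝ => (‖σ‖₊ : ℝ≥0∞) * C) (𝓝[>] (0:ℝ)) (𝓝 (0 * C)) :=
        ENNReal.Tendsto.mul_const hcont (Or.inr hCtop)
      rw [zero_mul] at h2
      have h3 := ENNReal.Tendsto.const_mul h2 (Or.inr (by simp : (d : ℝ≥0∞) ≠ ⊤))
      rwa [mul_zero] at h3
    exact tendsto_of_tendsto_of_tendsto_of_le_of_le tendsto_const_nhds hmul
      (fun σ => bot_le) (fun σ => gaussianEuc_moment_le d σ)
  have hEt : Tendsto (fun σ => ε σ + ε σ) (𝓝[>] (0:ℝ)) (𝓝 0) := by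
    have := hεt.add hεt
    rwa [add_zero] at this
  refine tendsto_of_tendsto_of_tendsto_of_le_of_le (g := fun σ => L - (ε σ + ε σ))
    (h := fun σ => L + (ε σ + ε σ)) ?_ ?_ ?_ ?_
  · have := ENNReal.Tendsto.sub (tendsto_const_nhds (x := L)) hEt (Or.inl hLtop)
    rwa [tsub_zero] at this
  · have := (tendsto_const_nhds (x := L) (f := 𝓝[>] (0:ℝ))).add hEt
    rwa [add_zero] at this
  · exact fun σ => tsub_le_iff_right.2 (hlb σ)
  · exact fun σ => hub σ
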